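/- Let ψ, φ ∈ ℝ^d be descending probability vectors with all entries strictly positive such that ψ is not majorized by φ, let φ^∧ = ψ∧φ, and let q_j, l_j (j = 1,…,k) be given by the recursive construction for (ψ, φ). Define the two intermediate vectors φ^f_i = q_j φ_i and φ^t_i = q_j (φ^∧)_i for i ∈ {l_j,…,l_{j−1}−1}, j ∈ {1,…,k}. Then ∑_{i=1}^d φ^t_i = 1 and φ^t ≺ φ^f: the intermediate vector of the thrifty protocol is more coherent than (majorized by) that of the greedy protocol. -/
import Mathlib


open Finset

/-- Tail-sum coherence monotone `C_l(p) = ∑_{i=l}^d p_i`, for a vector with (1-based)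
entries `p 1, …, p d`.  Note `Cm d p (d+1) = 0` automatically. -/
noncomputable def Cm (d : ℕ) (p : ℕ → ℝ) (l : ℕ) : ℝ := ∑ i ∈ Finset.Icc l d, p i

/-- `p` is a descending probability vector on the (1-based) index range `{1, …, d}`. -/
structure DescProb (d : ℕ) (p : ℕ → ℝ) : Prop where
  nonneg : ∀ i, 1 ≤ i → i ≤ d → 0 ≤ p i
  anti : ∀ i j, 1 ≤ i → i ≤ j → j ≤ d → p j ≤ p i
  sum_one : ∑ i ∈ Finset.Icc 1 d, p i = 1

/-- `p ≺ q` : `p` is majorized by `q` (both regarded as descending vectors on `{1, …, d}`). -/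
def MajorizedBy (d : ℕ) (p q : ℕ → ℝ) : Prop :=
  (∀ k, 1 ≤ k → k ≤ d → ∑ i ∈ Finset.Icc 1 k, p i ≤ ∑ i ∈ Finset.Icc 1 k, q i) ∧
    ∑ i ∈ Finset.Icc 1 d, p i = ∑ i ∈ Finset.Icc 1 d, q i

/-- The ratio `(C_l(ψ) - C_prev(ψ)) / (C_l(φ) - C_prev(φ))` appearing in the recursive
construction of the intermediate vector. -/
noncomputable def ratio (d : ℕ) (ψ φ : ℕ → ℝ) (prev l : ℕ) : ℝ :=
  (Cm d ψ l - Cm d ψ prev) / (Cm d φ l - Cm d φ prev)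

/-- One step of the recursion: the minimal ratio over `l ∈ {1, …, prev - 1}`. -/
noncomputable def stepQ (d : ℕ) (ψ φ : ℕ → ℝ) (prev : ℕ) : ℝ :=
  sInf {x : ℝ | ∃ l, 1 ≤ l ∧ l ≤ prev - 1 ∧ x = ratio d ψ φ prev l}

/-- One step of the recursion: the smallest `l ∈ {1, …, prev - 1}` attaining the minimal
ratio. -/
noncomputable def stepL (d : ℕ) (ψ φ : ℕ → ℝ) (prev : ℕ) : ℕ :=
  sInf {l : ℕ | 1 ≤ l ∧ l ≤ prev - 1 ∧ ratio d ψ φ prev l = stepQ d ψ φ prev}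

/-- The sequence of indices `l_0 = d + 1 > l_1 > l_2 > ⋯` of the recursive construction. -/
noncomputable def Lseq (d : ℕ) (ψ φ : ℕ → ℝ) : ℕ → ℕ
  | 0 => d + 1
  | j + 1 => stepL d ψ φ (Lseq d ψ φ j)

/-- The sequence of ratios `q_1 < q_2 < ⋯` of the recursive construction (`Qseq d ψ φ j`
is `q_j` for `j ≥ 1`; the value at `0` is irrelevant). -/
noncomputable def Qseq (d : ℕ) (ψ φ : ℕ → ℝ) : ℕ → ℝ
  | 0 => 1
  | j + 1 => stepQ d ψ φ (Lseq d ψ φ j)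

/-- The terminating step `k` of the recursion: the first index `j` with `l_j = 1`. -/
noncomputable def kstop (d : ℕ) (ψ φ : ℕ → ℝ) : ℕ := sInf {j : ℕ | Lseq d ψ φ j = 1}

/-- The intermediate vector `φ^f`, with `φ^f_i = q_j φ_i` for `i ∈ {l_j, …, l_{j-1} - 1}`
(for `i ∈ {1, …, d}`, the smallest `j` with `l_j ≤ i` is precisely the `j` with
`l_j ≤ i ≤ l_{j-1} - 1`). -/
noncomputable def phif (d : ℕ) (ψ φ : ℕ → ℝ) (i : ℕ) : ℝ :=
  Qseq d ψ φ (sInf {j : ℕ | Lseq d ψ φ j ≤ i}) * φ i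

/-- The meet `p ∧ q` of two descending probability vectors in the majorization lattice,
defined componentwise via prefix sums (empty sums are `0`). -/
noncomputable def meet2 (p q : ℕ → ℝ) (i : ℕ) : ℝ :=
  min (∑ j ∈ Finset.Icc 1 i, p j) (∑ j ∈ Finset.Icc 1 i, q j) -
    min (∑ j ∈ Finset.Icc 1 (i - 1), p j) (∑ j ∈ Finset.Icc 1 (i - 1), q j)

/-- The intermediate vector `φ^t` of the thrifty protocol, with `φ^t_i = q_j (ψ ∧ φ)_i`
for `i ∈ {l_j, …, l_{j-1} - 1}`. -/
noncomputable def phit (d : ℕ) (ψ φ : ℕ → ℝ) (i : ℕ) : ℝ :=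
  Qseq d ψ φ (sInf {j : ℕ | Lseq d ψ φ j ≤ i}) * meet2 ψ φ i


section Aux

variable {d : ℕ} {ψ φ : ℕ → ℝ}

lemma sum_split (f : ℕ → ℝ) {l m : ℕ} (h1 : 1 ≤ m) (h2 : l ≤ m) (h3 : m ≤ d + 1) :
    (∑ i ∈ Finset.Icc l (m - 1), f i) + ∑ i ∈ Finset.Icc m d, f i
      = ∑ i ∈ Finset.Icc l d, f i := by
  have e1 : Finset.Icc l (m - 1) = Finset.Ico l m := by
    rw [← Finset.Ico_add_one_right_eq_Icc]; congr 1; omega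
  have e2 : Finset.Icc m d = Finset.Ico m (d + 1) := (Finset.Ico_add_one_right_eq_Icc ..).symm
  have e3 : Finset.Icc l d = Finset.Ico l (d + 1) := (Finset.Ico_add_one_right_eq_Icc ..).symm
  rw [e1, e2, e3]
  exact Finset.sum_Ico_consecutive f h2 (by omega)

lemma Cm_split (p : ℕ → ℝ) {l m : ℕ} (h1 : 1 ≤ m) (h2 : l ≤ m) (h3 : m ≤ d + 1) :
    (∑ i ∈ Finset.Icc l (m - 1), p i) + Cm d p m = Cm d p l :=
  sum_split p h1 h2 h3

lemma Cm_of_gt (p : ℕ → ℝ) {l : ℕ} (h : d < l) : Cm d p l = 0 := by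
  unfold Cm
  rw [Finset.Icc_eq_empty (by omega), Finset.sum_empty]

lemma Cm_one {p : ℕ → ℝ} (hp : DescProb d p) : Cm d p 1 = 1 := hp.sum_one

lemma block_pos {p : ℕ → ℝ} (hpos : ∀ i, 1 ≤ i → i ≤ d → 0 < p i) {l m : ℕ}
    (h1 : 1 ≤ l) (h2 : l < m) (h3 : m ≤ d + 1) :
    0 < ∑ i ∈ Finset.Icc l (m - 1), p i := by
  apply Finset.sum_pos
  · intro i hi
    rw [Finset.mem_Icc] at hi
    exact hpos i (by omega) (by omega)
  · exact Finset.nonempty_Icc.2 (by omega)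

lemma Cm_diff_pos {p : ℕ → ℝ} (hpos : ∀ i, 1 ≤ i → i ≤ d → 0 < p i) {l m : ℕ}
    (h1 : 1 ≤ l) (h2 : l < m) (h3 : m ≤ d + 1) :
    0 < Cm d p l - Cm d p m := by
  have hs := Cm_split (d := d) p (l := l) (m := m) (by omega) (by omega) h3
  have hb := block_pos hpos h1 h2 h3
  linarith

lemma Cm_le_one {p : ℕ → ℝ} (hp : DescProb d p) {l : ℕ} (h1 : 1 ≤ l) : Cm d p l ≤ 1 := by
  rcases le_or_gt l (d + 1) with h | h
  · have hs := Cm_split (d := d) p (l := 1) (m := l) h1 h1 h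
    have h0 : 0 ≤ ∑ i ∈ Finset.Icc 1 (l - 1), p i :=
      Finset.sum_nonneg fun i hi => by
        rw [Finset.mem_Icc] at hi
        exact hp.nonneg i (by omega) (by omega)
    have h1' : Cm d p 1 = 1 := hp.sum_one
    linarith
  · rw [Cm_of_gt p (by omega)]; norm_num

lemma stepL_of_small {prev : ℕ} (h : prev ≤ 1) : stepL d ψ φ prev = 0 := by
  unfold stepL
  convert Nat.sInf_empty
  rw [Set.eq_empty_iff_forall_notMem]
  rintro l ⟨h1, h2, -⟩
  omega

lemma step_spec (hψ : DescProb d ψ) (hφ : DescProb d φ)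
    (hψpos : ∀ i, 1 ≤ i → i ≤ d → 0 < ψ i) (hφpos : ∀ i, 1 ≤ i → i ≤ d → 0 < φ i)
    {prev : ℕ} (h2 : 2 ≤ prev) (hpd : prev ≤ d + 1)
    (hinv : Cm d ψ prev ≤ Cm d φ prev) :
    1 ≤ stepL d ψ φ prev ∧ stepL d ψ φ prev ≤ prev - 1 ∧
      ratio d ψ φ prev (stepL d ψ φ prev) = stepQ d ψ φ prev ∧
      0 < stepQ d ψ φ prev ∧
      (∀ l, 1 ≤ l → l ≤ prev - 1 → stepQ d ψ φ prev ≤ ratio d ψ φ prev l) ∧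
      Cm d ψ (stepL d ψ φ prev) ≤ Cm d φ (stepL d ψ φ prev) := by
  have hden : ∀ l, 1 ≤ l → l ≤ prev - 1 → 0 < Cm d φ l - Cm d φ prev := fun l hl1 hl2 =>
    Cm_diff_pos hφpos hl1 (by omega) hpd
  have hnum : ∀ l, 1 ≤ l → l ≤ prev - 1 → 0 < Cm d ψ l - Cm d ψ prev := fun l hl1 hl2 =>
    Cm_diff_pos hψpos hl1 (by omega) hpd
  obtain ⟨l₀, hl₀mem, hl₀min⟩ := Finset.exists_min_image (Finset.Icc 1 (prev - 1))
    (ratio d ψ φ prev) ⟨1, Finset.mem_Icc.2 ⟨le_refl 1, by omega⟩⟩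
  rw [Finset.mem_Icc] at hl₀mem
  have hmemS : ratio d ψ φ prev l₀ ∈
      {x : ℝ | ∃ l, 1 ≤ l ∧ l ≤ prev - 1 ∧ x = ratio d ψ φ prev l} :=
    ⟨l₀, hl₀mem.1, hl₀mem.2, rfl⟩
  have hlb : ∀ x ∈ {x : ℝ | ∃ l, 1 ≤ l ∧ l ≤ prev - 1 ∧ x = ratio d ψ φ prev l},
      ratio d ψ φ prev l₀ ≤ x := by
    rintro x ⟨l, ha, hb, rfl⟩
    exact hl₀min l (Finset.mem_Icc.2 ⟨ha, hb⟩)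
  have hQ : stepQ d ψ φ prev = ratio d ψ φ prev l₀ := by
    unfold stepQ
    exact le_antisymm (csInf_le ⟨_, hlb⟩ hmemS) (le_csInf ⟨_, hmemS⟩ hlb)
  have hT : stepL d ψ φ prev ∈
      {l : ℕ | 1 ≤ l ∧ l ≤ prev - 1 ∧ ratio d ψ φ prev l = stepQ d ψ φ prev} := by
    apply Nat.sInf_mem
    exact ⟨l₀, hl₀mem.1, hl₀mem.2, hQ.symm⟩
  obtain ⟨hL1, hL2, hLr⟩ := hT
  have hQpos : 0 < stepQ d ψ φ prev := by
    rw [hQ]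
    unfold ratio
    exact div_pos (hnum _ hl₀mem.1 hl₀mem.2) (hden _ hl₀mem.1 hl₀mem.2)
  have hmin : ∀ l, 1 ≤ l → l ≤ prev - 1 → stepQ d ψ φ prev ≤ ratio d ψ φ prev l := by
    intro l ha hb
    rw [hQ]
    exact hl₀min l (Finset.mem_Icc.2 ⟨ha, hb⟩)
  refine ⟨hL1, hL2, hLr, hQpos, hmin, ?_⟩
  rcases eq_or_lt_of_le hL1 with h1 | h1
  · rw [← h1, Cm_one hψ, Cm_one hφ]
  · by_contra hcon
    push_neg at hcon
    have hr1 : stepQ d ψ φ prev ≤ ratio d ψ φ prev 1 := hmin 1 le_rfl (by omega)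
    have hrle : ratio d ψ φ prev (stepL d ψ φ prev) ≤ ratio d ψ φ prev 1 := by
      rw [hLr]; exact hr1
    have h1B : 0 < 1 - Cm d φ prev := by
      have := hden 1 le_rfl (by omega)
      rw [Cm_one hφ] at this
      linarith
    have hbB : 0 < Cm d φ (stepL d ψ φ prev) - Cm d φ prev := hden _ hL1 hL2
    unfold ratio at hrle
    rw [Cm_one hψ, Cm_one hφ] at hrle
    have hcross : (Cm d ψ (stepL d ψ φ prev) - Cm d ψ prev) * (1 - Cm d φ prev) ≤
        (1 - Cm d ψ prev) * (Cm d φ (stepL d ψ φ prev) - Cm d φ prev) :=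
      (div_le_div_iff₀ hbB h1B).1 hrle
    have hb1 : Cm d φ (stepL d ψ φ prev) ≤ 1 := Cm_le_one hφ hL1
    nlinarith [mul_pos (sub_pos.2 hcon) h1B,
      mul_nonneg (sub_nonneg.2 hinv) (sub_nonneg.2 hb1)]

lemma chain (hψ : DescProb d ψ) (hφ : DescProb d φ)
    (hψpos : ∀ i, 1 ≤ i → i ≤ d → 0 < ψ i) (hφpos : ∀ i, 1 ≤ i → i ≤ d → 0 < φ i) :
    ∀ j, 1 ≤ Lseq d ψ φ j →
      Lseq d ψ φ j + j ≤ d + 1 ∧ Cm d ψ (Lseq d ψ φ j) ≤ Cm d φ (Lseq d ψ φ j) := by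
  intro j
  induction j with
  | zero =>
    intro _
    have hL0 : Lseq d ψ φ 0 = d + 1 := rfl
    rw [hL0]
    refine ⟨by omega, ?_⟩
    rw [Cm_of_gt ψ (by omega), Cm_of_gt φ (by omega)]
  | succ j ih =>
    intro h1
    have hLs : Lseq d ψ φ (j + 1) = stepL d ψ φ (Lseq d ψ φ j) := rfl
    have h2 : 2 ≤ Lseq d ψ φ j := by
      by_contra h
      push_neg at h
      rw [hLs, stepL_of_small (by omega)] at h1
      omega
    obtain ⟨hb, hinv⟩ := ih (by omega)
    obtain ⟨s1, s2, -, -, -, s6⟩ := step_spec hψ hφ hψpos hφpos h2 (by omega) hinv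
    rw [hLs]
    exact ⟨by omega, s6⟩

lemma step_at (hψ : DescProb d ψ) (hφ : DescProb d φ)
    (hψpos : ∀ i, 1 ≤ i → i ≤ d → 0 < ψ i) (hφpos : ∀ i, 1 ≤ i → i ≤ d → 0 < φ i)
    {j : ℕ} (h : 2 ≤ Lseq d ψ φ j) :
    1 ≤ Lseq d ψ φ (j + 1) ∧ Lseq d ψ φ (j + 1) < Lseq d ψ φ j := by
  obtain ⟨hb, hinv⟩ := chain hψ hφ hψpos hφpos j (by omega)
  obtain ⟨s1, s2, -⟩ := step_spec hψ hφ hψpos hφpos h (by omega) hinv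
  have hLs : Lseq d ψ φ (j + 1) = stepL d ψ φ (Lseq d ψ φ j) := rfl
  rw [hLs]
  exact ⟨s1, by omega⟩

lemma kstop_spec (hd : 1 ≤ d) (hψ : DescProb d ψ) (hφ : DescProb d φ)
    (hψpos : ∀ i, 1 ≤ i → i ≤ d → 0 < ψ i) (hφpos : ∀ i, 1 ≤ i → i ≤ d → 0 < φ i) :
    Lseq d ψ φ (kstop d ψ φ) = 1 ∧ ∀ j < kstop d ψ φ, 2 ≤ Lseq d ψ φ j := by
  have hL0 : Lseq d ψ φ 0 = d + 1 := rfl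
  have hex : ∃ j, Lseq d ψ φ j = 1 := by
    by_contra hno
    push_neg at hno
    have hall : ∀ j, 2 ≤ Lseq d ψ φ j := by
      intro j
      induction j with
      | zero => rw [hL0]; omega
      | succ j ih =>
        have hs := (step_at hψ hφ hψpos hφpos ih).1
        have hne := hno (j + 1)
        omega
    have hc := (chain hψ hφ hψpos hφpos d (by have := hall d; omega)).1
    have := hall d
    omega
  have hm : Lseq d ψ φ (kstop d ψ φ) = 1 := Nat.sInf_mem hex
  refine ⟨hm, fun j hj => ?_⟩
  have hne1 : Lseq d ψ φ j ≠ 1 := by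
    intro h
    have := Nat.sInf_le (show j ∈ {j : ℕ | Lseq d ψ φ j = 1} from h)
    have : kstop d ψ φ ≤ j := this
    omega
  by_contra hle
  push_neg at hle
  have h0 : Lseq d ψ φ j = 0 := by omega
  have hzero : ∀ m, Lseq d ψ φ (j + m) = 0 := by
    intro m
    induction m with
    | zero => simpa using h0
    | succ m ih =>
      have hLs : Lseq d ψ φ (j + (m + 1)) = stepL d ψ φ (Lseq d ψ φ (j + m)) := rfl
      rw [hLs, ih]
      exact stepL_of_small (by omega)
  have hz := hzero (kstop d ψ φ - j)
  rw [Nat.add_sub_cancel' (by omega)] at hz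
  omega

lemma Lseq_anti (hd : 1 ≤ d) (hψ : DescProb d ψ) (hφ : DescProb d φ)
    (hψpos : ∀ i, 1 ≤ i → i ≤ d → 0 < ψ i) (hφpos : ∀ i, 1 ≤ i → i ≤ d → 0 < φ i) :
    ∀ b, b ≤ kstop d ψ φ → ∀ a, a ≤ b → Lseq d ψ φ b ≤ Lseq d ψ φ a := by
  intro b
  induction b with
  | zero =>
    intro _ a ha
    obtain rfl : a = 0 := by omega
    exact le_rfl
  | succ b ih =>
    intro hbk a hab
    have h2b : 2 ≤ Lseq d ψ φ b := (kstop_spec hd hψ hφ hψpos hφpos).2 b (by omega)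
    have hstep := (step_at hψ hφ hψpos hφpos h2b).2
    rcases Nat.eq_or_lt_of_le hab with h | h
    · rw [h]
    · have := ih (by omega) a (by omega)
      omega

lemma Jval (hd : 1 ≤ d) (hψ : DescProb d ψ) (hφ : DescProb d φ)
    (hψpos : ∀ i, 1 ≤ i → i ≤ d → 0 < ψ i) (hφpos : ∀ i, 1 ≤ i → i ≤ d → 0 < φ i)
    {j i : ℕ} (hj1 : 1 ≤ j) (hjk : j ≤ kstop d ψ φ)
    (h1 : Lseq d ψ φ j ≤ i) (h2 : i < Lseq d ψ φ (j - 1)) :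
    sInf {j' : ℕ | Lseq d ψ φ j' ≤ i} = j := by
  have hmem : j ∈ {j' : ℕ | Lseq d ψ φ j' ≤ i} := h1
  have hle : sInf {j' : ℕ | Lseq d ψ φ j' ≤ i} ≤ j := Nat.sInf_le hmem
  have hmem2 : Lseq d ψ φ (sInf {j' : ℕ | Lseq d ψ φ j' ≤ i}) ≤ i :=
    Nat.sInf_mem (⟨j, hmem⟩ : {j' : ℕ | Lseq d ψ φ j' ≤ i}.Nonempty)
  by_contra hne
  have hs : sInf {j' : ℕ | Lseq d ψ φ j' ≤ i} < j := lt_of_le_of_ne hle hne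
  have hanti := Lseq_anti hd hψ hφ hψpos hφpos (j - 1) (by omega)
    (sInf {j' : ℕ | Lseq d ψ φ j' ≤ i}) (by omega)
  omega

lemma meet_pre (ψ φ : ℕ → ℝ) : ∀ m, ∑ i ∈ Finset.Icc 1 m, meet2 ψ φ i
    = min (∑ i ∈ Finset.Icc 1 m, ψ i) (∑ i ∈ Finset.Icc 1 m, φ i) := by
  intro m
  induction m with
  | zero => simp
  | succ m ih =>
    have e : ∀ f : ℕ → ℝ, ∑ i ∈ Finset.Icc 1 (m + 1), f i
        = (∑ i ∈ Finset.Icc 1 m, f i) + f (m + 1) := by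
      intro f
      rw [← Finset.Ico_add_one_right_eq_Icc, Finset.sum_Ico_succ_top (by omega), Finset.Ico_add_one_right_eq_Icc]
    rw [e (meet2 ψ φ), e ψ, e φ, ih]
    have hm : meet2 ψ φ (m + 1) =
        min ((∑ i ∈ Finset.Icc 1 m, ψ i) + ψ (m + 1)) ((∑ i ∈ Finset.Icc 1 m, φ i) + φ (m + 1))
          - min (∑ i ∈ Finset.Icc 1 m, ψ i) (∑ i ∈ Finset.Icc 1 m, φ i) := by
      unfold meet2
      rw [Nat.add_sub_cancel, e ψ, e φ]
    rw [hm]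
    ring

lemma Cm_meet (hψ : DescProb d ψ) (hφ : DescProb d φ) {l : ℕ} (h1 : 1 ≤ l) (h2 : l ≤ d + 1) :
    Cm d (meet2 ψ φ) l = max (Cm d ψ l) (Cm d φ l) := by
  have eψ := Cm_split (d := d) ψ (l := 1) (m := l) h1 h1 h2
  have eφ := Cm_split (d := d) φ (l := 1) (m := l) h1 h1 h2
  have em := Cm_split (d := d) (meet2 ψ φ) (l := 1) (m := l) h1 h1 h2
  have hmp := meet_pre ψ φ (l - 1)
  have hCm1 : Cm d (meet2 ψ φ) 1 = 1 := by
    show (∑ i ∈ Finset.Icc 1 d, meet2 ψ φ i) = 1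
    rw [meet_pre ψ φ d, hψ.sum_one, hφ.sum_one]
    simp
  rw [hmp, hCm1] at em
  rw [Cm_one hψ] at eψ
  rw [Cm_one hφ] at eφ
  rcases le_total (∑ i ∈ Finset.Icc 1 (l - 1), ψ i) (∑ i ∈ Finset.Icc 1 (l - 1), φ i) with h | h
  · rw [min_eq_left h] at em
    have hle : Cm d φ l ≤ Cm d ψ l := by linarith
    rw [max_eq_left hle]
    linarith
  · rw [min_eq_right h] at em
    have hle : Cm d ψ l ≤ Cm d φ l := by linarith
    rw [max_eq_right hle]
    linarith

end Aux

/-- If `ψ` is not majorized by `φ`, the intermediate vector `φ^t` of the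
thrifty protocol sums to `1` and is majorized by the intermediate vector `φ^f` of the
greedy protocol: `φ^t ≺ φ^f`. -/
theorem thrifty_intermediate_majorized (d : ℕ) (hd : 1 ≤ d) (ψ φ : ℕ → ℝ)
    (hψ : DescProb d ψ) (hφ : DescProb d φ)
    (hψpos : ∀ i, 1 ≤ i → i ≤ d → 0 < ψ i) (hφpos : ∀ i, 1 ≤ i → i ≤ d → 0 < φ i)
    (hnm : ¬ MajorizedBy d ψ φ) :
    (∑ i ∈ Finset.Icc 1 d, phit d ψ φ i = 1) ∧
      MajorizedBy d (phit d ψ φ) (phif d ψ φ) := by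
  classical
  have hL0 : Lseq d ψ φ 0 = d + 1 := rfl
  obtain ⟨hk1, hk2⟩ := kstop_spec hd hψ hφ hψpos hφpos
  have hkpos : 1 ≤ kstop d ψ φ := by
    rcases Nat.eq_zero_or_pos (kstop d ψ φ) with h | h
    · rw [h, hL0] at hk1; omega
    · exact h
  have hchain : ∀ j ≤ kstop d ψ φ,
      Lseq d ψ φ j + j ≤ d + 1 ∧ Cm d ψ (Lseq d ψ φ j) ≤ Cm d φ (Lseq d ψ φ j) := by
    intro j hj
    rcases Nat.eq_or_lt_of_le hj with h | h
    · rw [h]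
      exact chain hψ hφ hψpos hφpos _ (by rw [hk1])
    · exact chain hψ hφ hψpos hφpos _ (by have := hk2 j h; omega)
  have hstep : ∀ j < kstop d ψ φ,
      1 ≤ stepL d ψ φ (Lseq d ψ φ j) ∧ stepL d ψ φ (Lseq d ψ φ j) ≤ Lseq d ψ φ j - 1 ∧
      ratio d ψ φ (Lseq d ψ φ j) (stepL d ψ φ (Lseq d ψ φ j)) = stepQ d ψ φ (Lseq d ψ φ j) ∧
      0 < stepQ d ψ φ (Lseq d ψ φ j) ∧
      (∀ l, 1 ≤ l → l ≤ Lseq d ψ φ j - 1 →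
        stepQ d ψ φ (Lseq d ψ φ j) ≤ ratio d ψ φ (Lseq d ψ φ j) l) ∧
      Cm d ψ (stepL d ψ φ (Lseq d ψ φ j)) ≤ Cm d φ (stepL d ψ φ (Lseq d ψ φ j)) := by
    intro j hj
    have h2 := hk2 j hj
    obtain ⟨hb, hinv⟩ := hchain j (by omega)
    exact step_spec hψ hφ hψpos hφpos h2 (by omega) hinv
  -- Tail sums at the breakpoints.
  have TL : ∀ j, j ≤ kstop d ψ φ →
      (∑ i ∈ Finset.Icc (Lseq d ψ φ j) d, phit d ψ φ i = Cm d ψ (Lseq d ψ φ j)) ∧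
      (∑ i ∈ Finset.Icc (Lseq d ψ φ j) d, phif d ψ φ i = Cm d ψ (Lseq d ψ φ j)) := by
    intro j
    induction j with
    | zero =>
      intro _
      rw [hL0, Finset.Icc_eq_empty (by omega), Finset.sum_empty, Finset.sum_empty,
        Cm_of_gt ψ (by omega)]
      exact ⟨rfl, rfl⟩
    | succ j ih =>
      intro hjk
      obtain ⟨iht, ihf⟩ := ih (by omega)
      have hj2 : 2 ≤ Lseq d ψ φ j := hk2 j (by omega)
      obtain ⟨s1, s2, s3, s4, s5, s6⟩ := hstep j (by omega)
      have hLs : Lseq d ψ φ (j + 1) = stepL d ψ φ (Lseq d ψ φ j) := rfl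
      have hQs : Qseq d ψ φ (j + 1) = stepQ d ψ φ (Lseq d ψ φ j) := rfl
      rw [← hLs] at s1 s2 s3 s6
      rw [← hQs] at s3 s4
      obtain ⟨hbj, hinvj⟩ := hchain j (by omega)
      obtain ⟨hbj1, hinvj1⟩ := hchain (j + 1) hjk
      have hbd : Lseq d ψ φ j ≤ d + 1 := by omega
      have hJ : ∀ i ∈ Finset.Icc (Lseq d ψ φ (j + 1)) (Lseq d ψ φ j - 1),
          sInf {j' : ℕ | Lseq d ψ φ j' ≤ i} = j + 1 := by
        intro i hi
        rw [Finset.mem_Icc] at hi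
        refine Jval hd hψ hφ hψpos hφpos (by omega) hjk hi.1 ?_
        rw [Nat.add_sub_cancel]
        omega
      have hqr : Qseq d ψ φ (j + 1) *
          (Cm d φ (Lseq d ψ φ (j + 1)) - Cm d φ (Lseq d ψ φ j))
          = Cm d ψ (Lseq d ψ φ (j + 1)) - Cm d ψ (Lseq d ψ φ j) := by
        rw [← s3]
        unfold ratio
        exact div_mul_cancel₀ _
          (ne_of_gt (Cm_diff_pos hφpos (by omega) (by omega) hbd))
      have hfsum : ∑ i ∈ Finset.Icc (Lseq d ψ φ (j + 1)) (Lseq d ψ φ j - 1), φ i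
          = Cm d φ (Lseq d ψ φ (j + 1)) - Cm d φ (Lseq d ψ φ j) := by
        have := Cm_split (d := d) φ (l := Lseq d ψ φ (j + 1)) (m := Lseq d ψ φ j)
          (by omega) (by omega) hbd
        linarith
      have hmsum : ∑ i ∈ Finset.Icc (Lseq d ψ φ (j + 1)) (Lseq d ψ φ j - 1), meet2 ψ φ i
          = Cm d φ (Lseq d ψ φ (j + 1)) - Cm d φ (Lseq d ψ φ j) := by
        have := Cm_split (d := d) (meet2 ψ φ) (l := Lseq d ψ φ (j + 1)) (m := Lseq d ψ φ j)
          (by omega) (by omega) hbd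
        rw [Cm_meet hψ hφ (by omega) hbd, max_eq_right hinvj,
          Cm_meet hψ hφ (by omega) (by omega), max_eq_right hinvj1] at this
        linarith
      constructor
      · have hsplit := sum_split (d := d) (phit d ψ φ) (l := Lseq d ψ φ (j + 1))
          (m := Lseq d ψ φ j) (by omega) (by omega) hbd
        have hblock : ∑ i ∈ Finset.Icc (Lseq d ψ φ (j + 1)) (Lseq d ψ φ j - 1), phit d ψ φ i
            = Qseq d ψ φ (j + 1) *
              ∑ i ∈ Finset.Icc (Lseq d ψ φ (j + 1)) (Lseq d ψ φ j - 1), meet2 ψ φ i := by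
          rw [Finset.mul_sum]
          refine Finset.sum_congr rfl fun i hi => ?_
          show Qseq d ψ φ (sInf {j' : ℕ | Lseq d ψ φ j' ≤ i}) * meet2 ψ φ i = _
          rw [hJ i hi]
        rw [hmsum, hqr] at hblock
        linarith
      · have hsplit := sum_split (d := d) (phif d ψ φ) (l := Lseq d ψ φ (j + 1))
          (m := Lseq d ψ φ j) (by omega) (by omega) hbd
        have hblock : ∑ i ∈ Finset.Icc (Lseq d ψ φ (j + 1)) (Lseq d ψ φ j - 1), phif d ψ φ i
            = Qseq d ψ φ (j + 1) *
              ∑ i ∈ Finset.Icc (Lseq d ψ φ (j + 1)) (Lseq d ψ φ j - 1), φ i := by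
          rw [Finset.mul_sum]
          refine Finset.sum_congr rfl fun i hi => ?_
          show Qseq d ψ φ (sInf {j' : ℕ | Lseq d ψ φ j' ≤ i}) * φ i = _
          rw [hJ i hi]
        rw [hfsum, hqr] at hblock
        linarith
  obtain ⟨tk, fk⟩ := TL (kstop d ψ φ) le_rfl
  rw [hk1] at tk fk
  have sum_t : ∑ i ∈ Finset.Icc 1 d, phit d ψ φ i = 1 := by
    rw [tk, Cm_one hψ]
  have sum_f : ∑ i ∈ Finset.Icc 1 d, phif d ψ φ i = 1 := by
    rw [fk, Cm_one hψ]
  -- tail comparison at an arbitrary point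
  have tails : ∀ m, 2 ≤ m → m ≤ d →
      ∑ i ∈ Finset.Icc m d, phif d ψ φ i ≤ ∑ i ∈ Finset.Icc m d, phit d ψ φ i := by
    intro m hm2 hmd
    set j := sInf {j' : ℕ | Lseq d ψ φ j' ≤ m} with hjdef
    have hkmem : Lseq d ψ φ (kstop d ψ φ) ≤ m := by rw [hk1]; omega
    have hne : {j' : ℕ | Lseq d ψ φ j' ≤ m}.Nonempty := ⟨kstop d ψ φ, hkmem⟩
    have hjmem : Lseq d ψ φ j ≤ m := Nat.sInf_mem hne
    have hjk : j ≤ kstop d ψ φ := Nat.sInf_le hkmem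
    have hj1 : 1 ≤ j := by
      by_contra h
      push_neg at h
      have hj0 : j = 0 := by omega
      rw [hj0, hL0] at hjmem
      omega
    have hjm : m < Lseq d ψ φ (j - 1) := by
      by_contra h
      push_neg at h
      have := Nat.sInf_le (show j - 1 ∈ {j' : ℕ | Lseq d ψ φ j' ≤ m} from h)
      omega
    have hj2 : 2 ≤ Lseq d ψ φ (j - 1) := hk2 (j - 1) (by omega)
    obtain ⟨hbj, hinvj⟩ := hchain (j - 1) (by omega)
    obtain ⟨tj, fj⟩ := TL (j - 1) (by omega)
    obtain ⟨s1, s2, s3, s4, s5, s6⟩ := hstep (j - 1) (by omega)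
    have hj11 : j - 1 + 1 = j := by omega
    have hQs : Qseq d ψ φ j = stepQ d ψ φ (Lseq d ψ φ (j - 1)) := by
      conv_lhs => rw [← hj11]
      rfl
    have hQpos : 0 < Qseq d ψ φ j := by rw [hQs]; exact s4
    have hbd : Lseq d ψ φ (j - 1) ≤ d + 1 := by omega
    have hJ : ∀ i ∈ Finset.Icc m (Lseq d ψ φ (j - 1) - 1),
        sInf {j' : ℕ | Lseq d ψ φ j' ≤ i} = j := by
      intro i hi
      rw [Finset.mem_Icc] at hi
      exact Jval hd hψ hφ hψpos hφpos hj1 hjk (le_trans hjmem hi.1) (by omega)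
    have hmsum : ∑ i ∈ Finset.Icc m (Lseq d ψ φ (j - 1) - 1), meet2 ψ φ i
        = max (Cm d ψ m) (Cm d φ m) - Cm d φ (Lseq d ψ φ (j - 1)) := by
      have := Cm_split (d := d) (meet2 ψ φ) (l := m) (m := Lseq d ψ φ (j - 1))
        (by omega) (by omega) hbd
      rw [Cm_meet hψ hφ (by omega) hbd, max_eq_right hinvj,
        Cm_meet hψ hφ (by omega) (by omega)] at this
      linarith
    have hfsum : ∑ i ∈ Finset.Icc m (Lseq d ψ φ (j - 1) - 1), φ i
        = Cm d φ m - Cm d φ (Lseq d ψ φ (j - 1)) := by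
      have := Cm_split (d := d) φ (l := m) (m := Lseq d ψ φ (j - 1))
        (by omega) (by omega) hbd
      linarith
    have hsplit_t := sum_split (d := d) (phit d ψ φ) (l := m) (m := Lseq d ψ φ (j - 1))
      (by omega) (by omega) hbd
    have hsplit_f := sum_split (d := d) (phif d ψ φ) (l := m) (m := Lseq d ψ φ (j - 1))
      (by omega) (by omega) hbd
    have hbt : ∑ i ∈ Finset.Icc m (Lseq d ψ φ (j - 1) - 1), phit d ψ φ i
        = Qseq d ψ φ j * ∑ i ∈ Finset.Icc m (Lseq d ψ φ (j - 1) - 1), meet2 ψ φ i := by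
      rw [Finset.mul_sum]
      refine Finset.sum_congr rfl fun i hi => ?_
      show Qseq d ψ φ (sInf {j' : ℕ | Lseq d ψ φ j' ≤ i}) * meet2 ψ φ i = _
      rw [hJ i hi]
    have hbf : ∑ i ∈ Finset.Icc m (Lseq d ψ φ (j - 1) - 1), phif d ψ φ i
        = Qseq d ψ φ j * ∑ i ∈ Finset.Icc m (Lseq d ψ φ (j - 1) - 1), φ i := by
      rw [Finset.mul_sum]
      refine Finset.sum_congr rfl fun i hi => ?_
      show Qseq d ψ φ (sInf {j' : ℕ | Lseq d ψ φ j' ≤ i}) * φ i = _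
      rw [hJ i hi]
    rw [hmsum] at hbt
    rw [hfsum] at hbf
    have key : Qseq d ψ φ j * (max (Cm d ψ m) (Cm d φ m) - Cm d φ (Lseq d ψ φ (j - 1)))
        - Qseq d ψ φ j * (Cm d φ m - Cm d φ (Lseq d ψ φ (j - 1)))
        = Qseq d ψ φ j * (max (Cm d ψ m) (Cm d φ m) - Cm d φ m) := by ring
    have hnn : 0 ≤ Qseq d ψ φ j * (max (Cm d ψ m) (Cm d φ m) - Cm d φ m) :=
      mul_nonneg hQpos.le (by have := le_max_right (Cm d ψ m) (Cm d φ m); linarith)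
    linarith
  refine ⟨sum_t, ?_, by rw [sum_t, sum_f]⟩
  intro m hm1 hmd
  rcases Nat.eq_or_lt_of_le hmd with h | h
  · rw [h, sum_t, sum_f]
  · have hsp_t := sum_split (d := d) (phit d ψ φ) (l := 1) (m := m + 1)
      (by omega) (by omega) (by omega)
    have hsp_f := sum_split (d := d) (phif d ψ φ) (l := 1) (m := m + 1)
      (by omega) (by omega) (by omega)
    rw [Nat.add_sub_cancel] at hsp_t hsp_f
    have := tails (m + 1) (by omega) (by omega)
    linarith
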